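/- Let p be a probability density on ℝ with p bounded, and fix K ∈ ℕ. Define, for a probability density q, the surrogate objective L(q) = E_{z¹,…,z^K iid ~ q}[ -∑ᵢ wⁱ log q(zⁱ) ], where wⁱ = (p(zⁱ)/q(zⁱ)) / ∑ⱼ (p(zʲ)/q(zʲ)) are self-normalized importance weights (interpreting the sum as well-defined on the event of positive total weight). Then for every c ∈ ℝ there exists δ > 0 such that for q_δ the uniform density on (0, δ), L(q_δ) = log δ < c. In particular there exists q ≠ p with L(q) < L(p). -/

import Mathlib

open MeasureTheory Real

/-- The wake-phase surrogate objective: `L(q) = E_{z¹,…,z^K iid ~ q}[ -∑ᵢ wⁱ log q(zⁱ) ]`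
with self-normalized importance weights `wⁱ = (p(zⁱ)/q(zⁱ)) / ∑ⱼ (p(zʲ)/q(zʲ))` on the event
of positive total weight (and the convention of uniform weights `1/K` otherwise). -/
noncomputable def surrogate (K : ℕ) (p q : ℝ → ℝ) : ℝ :=
  ∫ z : Fin K → ℝ,
    (∏ j, q (z j)) *
      (-∑ i, (if 0 < ∑ j, p (z j) / q (z j)
          then (p (z i) / q (z i)) / ∑ j, p (z j) / q (z j)
          else (1 : ℝ) / K) * Real.log (q (z i)))

/-- The uniform probability density on `(0, δ)`. -/
noncomputable def unifDensity (δ : ℝ) : ℝ → ℝ :=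
  fun z => if z ∈ Set.Ioo 0 δ then 1 / δ else 0

lemma unif_integral {δ : ℝ} (hδ : 0 < δ) : ∫ z, unifDensity δ z = 1 := by
  have : (fun z => unifDensity δ z)
      = Set.indicator (Set.Ioo 0 δ) (fun _ => 1 / δ) := by
    funext z; simp [unifDensity, Set.indicator_apply]
  rw [this, integral_indicator measurableSet_Ioo, setIntegral_const,
    measureReal_def, Real.volume_Ioo, sub_zero, smul_eq_mul, ENNReal.toReal_ofReal hδ.le]
  field_simp

lemma surrogate_unif (K : ℕ) (hK : 0 < K) (p : ℝ → ℝ) {δ : ℝ} (hδ : 0 < δ) :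
    surrogate K p (unifDensity δ) = Real.log δ := by
  have key : ∀ z : Fin K → ℝ,
      (∏ j, unifDensity δ (z j)) *
        (-∑ i, (if 0 < ∑ j, p (z j) / unifDensity δ (z j)
            then (p (z i) / unifDensity δ (z i)) / ∑ j, p (z j) / unifDensity δ (z j)
            else (1 : ℝ) / K) * Real.log (unifDensity δ (z i)))
      = (∏ j, unifDensity δ (z j)) * Real.log δ := by
    intro z
    rcases eq_or_ne (∏ j, unifDensity δ (z j)) 0 with h0 | h0
    · rw [h0, zero_mul, zero_mul]
    · have hall : ∀ j, unifDensity δ (z j) = 1 / δ := by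
        intro j
        have := Finset.prod_ne_zero_iff.1 h0 j (Finset.mem_univ j)
        by_contra h
        simp only [unifDensity] at this h
        rcases em (z j ∈ Set.Ioo 0 δ) with hm | hm
        · simp [hm] at h
        · simp [hm] at this
      have hlog : ∀ j, Real.log (unifDensity δ (z j)) = -Real.log δ := by
        intro j; rw [hall j, one_div, Real.log_inv]
      have hw : (∑ i, (if 0 < ∑ j, p (z j) / unifDensity δ (z j)
            then (p (z i) / unifDensity δ (z i)) / ∑ j, p (z j) / unifDensity δ (z j)
            else (1 : ℝ) / K)) = 1 := by
        split_ifs with hpos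
        · rw [← Finset.sum_div, div_self (ne_of_gt hpos)]
        · rw [Finset.sum_const, Finset.card_univ, Fintype.card_fin, nsmul_eq_mul]
          field_simp
      congr 1
      calc -∑ i, (if 0 < ∑ j, p (z j) / unifDensity δ (z j)
            then (p (z i) / unifDensity δ (z i)) / ∑ j, p (z j) / unifDensity δ (z j)
            else (1 : ℝ) / K) * Real.log (unifDensity δ (z i))
          = -∑ i, (if 0 < ∑ j, p (z j) / unifDensity δ (z j)
            then (p (z i) / unifDensity δ (z i)) / ∑ j, p (z j) / unifDensity δ (z j)
            else (1 : ℝ) / K) * (-Real.log δ) := by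
            congr 1; apply Finset.sum_congr rfl; intro i _; rw [hlog i]
        _ = Real.log δ := by
            rw [← Finset.sum_mul, hw]; ring
  unfold surrogate
  rw [integral_congr_ae (Filter.Eventually.of_forall key), integral_mul_const,
    volume_pi, integral_fintype_prod_eq_pow (ι := Fin K) (unifDensity δ), unif_integral hδ,
    one_pow, one_mul]

theorem stmt0 (K : ℕ) (hK : 0 < K) (p : ℝ → ℝ)
    (hp_meas : Measurable p) (hp_nonneg : ∀ z, 0 ≤ p z)
    (hp_int : ∫ z, p z = 1) (hp_bdd : ∃ B : ℝ, ∀ z, p z ≤ B) :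
    (∀ c : ℝ, ∃ δ : ℝ, 0 < δ ∧
      surrogate K p (unifDensity δ) = Real.log δ ∧ Real.log δ < c) ∧
    ∃ q : ℝ → ℝ, q ≠ p ∧ surrogate K p q < surrogate K p p := by
  have part1 : ∀ c : ℝ, ∃ δ : ℝ, 0 < δ ∧
      surrogate K p (unifDensity δ) = Real.log δ ∧ Real.log δ < c := by
    intro c
    refine ⟨Real.exp (c - 1), Real.exp_pos _, surrogate_unif K hK p (Real.exp_pos _), ?_⟩
    rw [Real.log_exp]; linarith
  refine ⟨part1, ?_⟩
  obtain ⟨δ, hδ, hs, hlt⟩ := part1 (surrogate K p p)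
  obtain ⟨δ', hδ', hs', hlt'⟩ := part1 (min (surrogate K p p) (Real.log δ))
  have hδ'δ : δ' < δ := by
    have := (lt_min_iff.1 hlt').2
    rwa [Real.log_lt_log_iff hδ' hδ] at this
  by_cases hq : unifDensity δ = p
  · refine ⟨unifDensity δ', ?_, by rw [hs']; exact lt_of_lt_of_le hlt' (min_le_left _ _)⟩
    intro hq'
    have : unifDensity δ' ((δ' + δ) / 2) = unifDensity δ ((δ' + δ) / 2) := by
      rw [hq, hq']
    simp only [unifDensity, Set.mem_Ioo] at this
    have h1 : ¬ ((δ' + δ) / 2 < δ') := by linarith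
    have h2 : 0 < (δ' + δ) / 2 := by linarith
    have h3 : (δ' + δ) / 2 < δ := by linarith
    rw [if_neg (by tauto), if_pos ⟨h2, h3⟩] at this
    have : (1:ℝ)/δ = 0 := this.symm
    exact absurd this (by positivity)
  · exact ⟨unifDensity δ, hq, by rw [hs]; exact hlt⟩
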